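/- The relation ≼ is a partial order on the set of uniformly recurrent subgroups of a countable group G: it is reflexive, transitive, and antisymmetric. -/

import Mathlib

/-- The Chabauty topology on the space of subgroups of `G`. -/
noncomputable instance chabautyTopology {G : Type*} [Group G] :
    TopologicalSpace (Subgroup G) :=
  TopologicalSpace.induced
    (fun H : Subgroup G => fun g : G => @decide (g ∈ H) (Classical.propDecidable _))
    inferInstance

/-- A uniformly recurrent subgroup: a closed, minimal, conjugation-invariant nonempty
subset of the Chabauty space `Sub(G)`. -/
def IsURS {G : Type*} [Group G] (𝓗 : Set (Subgroup G)) : Prop :=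
  IsClosed 𝓗 ∧ 𝓗.Nonempty ∧
    (∀ (g : G), ∀ H ∈ 𝓗, Subgroup.map (MulAut.conj g).toMonoidHom H ∈ 𝓗) ∧
    ∀ 𝓚 : Set (Subgroup G), 𝓚 ⊆ 𝓗 → IsClosed 𝓚 → 𝓚.Nonempty →
      (∀ (g : G), ∀ H ∈ 𝓚, Subgroup.map (MulAut.conj g).toMonoidHom H ∈ 𝓚) → 𝓚 = 𝓗

/-- The relation `A ≼ B` on subsets of `Sub(G)`. -/
def URSPrec {G : Type*} [Group G] (A B : Set (Subgroup G)) : Prop :=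
  ∃ H ∈ A, ∃ K ∈ B, H ≤ K

namespace URSProofAux

open Set Filter Topology

variable {G : Type*} [Group G]

/-- The embedding of `Sub(G)` into the Cantor cube `G → Bool`. -/
noncomputable def chab : Subgroup G → G → Bool :=
  fun H : Subgroup G => fun g : G => @decide (g ∈ H) (Classical.propDecidable _)

lemma chab_eq_true {H : Subgroup G} {g : G} : chab H g = true ↔ g ∈ H := by
  simp [chab]

lemma chab_injective : Function.Injective (chab (G := G)) := by
  intro H K h
  ext g
  rw [← chab_eq_true, ← chab_eq_true, h]

lemma isInducing_chab : IsInducing (chab (G := G)) := ⟨rfl⟩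

lemma isEmbedding_chab : IsEmbedding (chab (G := G)) :=
  ⟨isInducing_chab, chab_injective⟩

lemma continuous_chab : Continuous (chab (G := G)) := isInducing_chab.continuous

lemma isClosed_range_chab : IsClosed (Set.range (chab (G := G))) := by
  have hrange : Set.range (chab (G := G)) =
      ({f : G → Bool | f 1 = true} ∩
        ⋂ (a : G), ⋂ (b : G), {f : G → Bool | f a = true → f b = true → f (a * b) = true}) ∩
        ⋂ (a : G), {f : G → Bool | f a = true → f a⁻¹ = true} := by
    ext f
    simp only [Set.mem_range, Set.mem_inter_iff, Set.mem_iInter, Set.mem_setOf_eq]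
    constructor
    · rintro ⟨H, rfl⟩
      refine ⟨⟨chab_eq_true.mpr H.one_mem, fun a b ha hb => ?_⟩, fun a ha => ?_⟩
      · exact chab_eq_true.mpr (H.mul_mem (chab_eq_true.mp ha) (chab_eq_true.mp hb))
      · exact chab_eq_true.mpr (H.inv_mem (chab_eq_true.mp ha))
    · rintro ⟨⟨h1, hmul⟩, hinv⟩
      refine ⟨{ carrier := {g : G | f g = true},
                one_mem' := h1,
                mul_mem' := fun ha hb => hmul _ _ ha hb,
                inv_mem' := fun ha => hinv _ ha }, ?_⟩
      funext g
      show (@decide (f g = true) (Classical.propDecidable _)) = f g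
      cases h : f g <;> simp [h]
  rw [hrange]
  refine IsClosed.inter (IsClosed.inter ?_ ?_) ?_
  · have : {f : G → Bool | f 1 = true} =
        (fun f : G → Bool => f 1) ⁻¹' {x : Bool | x = true} := rfl
    rw [this]
    exact (isClosed_discrete _).preimage (continuous_apply (1 : G))
  · refine isClosed_iInter fun a => isClosed_iInter fun b => ?_
    have : {f : G → Bool | f a = true → f b = true → f (a * b) = true} =
        (fun f : G → Bool => (f a, f b, f (a * b))) ⁻¹'
          {x : Bool × Bool × Bool | x.1 = true → x.2.1 = true → x.2.2 = true} := rfl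
    rw [this]
    exact (isClosed_discrete _).preimage
      ((continuous_apply a).prodMk ((continuous_apply b).prodMk (continuous_apply (a * b))))
  · refine isClosed_iInter fun a => ?_
    have : {f : G → Bool | f a = true → f a⁻¹ = true} =
        (fun f : G → Bool => (f a, f a⁻¹)) ⁻¹' {x : Bool × Bool | x.1 = true → x.2 = true} := rfl
    rw [this]
    exact (isClosed_discrete _).preimage
      ((continuous_apply a).prodMk (continuous_apply a⁻¹))

noncomputable instance : CompactSpace (Subgroup G) :=
  Topology.IsClosedEmbedding.compactSpace (f := chab (G := G))
    ⟨isEmbedding_chab, isClosed_range_chab⟩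

noncomputable instance : T2Space (Subgroup G) := isEmbedding_chab.t2Space

lemma isClosed_le_pairs : IsClosed {p : Subgroup G × Subgroup G | p.1 ≤ p.2} := by
  have h : {p : Subgroup G × Subgroup G | p.1 ≤ p.2} =
      ⋂ g : G, (fun p : Subgroup G × Subgroup G => (chab p.1 g, chab p.2 g)) ⁻¹'
        {q : Bool × Bool | q.1 = true → q.2 = true} := by
    ext p
    simp only [Set.mem_iInter, Set.mem_preimage, Set.mem_setOf_eq, SetLike.le_def]
    constructor
    · intro h g hg
      exact chab_eq_true.mpr (h (chab_eq_true.mp hg))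
    · intro h x hx
      exact chab_eq_true.mp (h x (chab_eq_true.mpr hx))
  rw [h]
  exact isClosed_iInter fun g => (isClosed_discrete _).preimage
    (((continuous_apply g).comp (continuous_chab.comp continuous_fst)).prodMk
      ((continuous_apply g).comp (continuous_chab.comp continuous_snd)))

/-- The key "pushing up" lemma: if some member of the URS `𝓗` is contained in a member
of the URS `𝓚`, then by minimality every member of `𝓗` is contained in a member of `𝓚`. -/
lemma urs_up {𝓗 𝓚 : Set (Subgroup G)} (h𝓗 : IsURS 𝓗) (h𝓚 : IsURS 𝓚)
    (h : URSPrec 𝓗 𝓚) : ∀ H ∈ 𝓗, ∃ K ∈ 𝓚, H ≤ K := by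
  obtain ⟨hcl, -, hinv, hmin⟩ := h𝓗
  set X := Prod.fst '' ((𝓗 ×ˢ 𝓚) ∩ {p : Subgroup G × Subgroup G | p.1 ≤ p.2}) with hXdef
  have hXsub : X ⊆ 𝓗 := by
    rintro _ ⟨p, ⟨⟨h1, -⟩, -⟩, rfl⟩
    exact h1
  have hXc : IsClosed X := by
    have hcomp : IsCompact ((𝓗 ×ˢ 𝓚) ∩ {p : Subgroup G × Subgroup G | p.1 ≤ p.2}) :=
      (hcl.isCompact.prod h𝓚.1.isCompact).inter_right isClosed_le_pairs
    exact (hcomp.image continuous_fst).isClosed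
  have hXne : X.Nonempty := by
    obtain ⟨H, hH, K, hK, hHK⟩ := h
    exact ⟨H, ⟨(H, K), ⟨⟨hH, hK⟩, hHK⟩, rfl⟩⟩
  have hXinv : ∀ (g : G), ∀ H ∈ X, Subgroup.map (MulAut.conj g).toMonoidHom H ∈ X := by
    rintro g _ ⟨⟨H, K⟩, ⟨⟨hH, hK⟩, hHK⟩, rfl⟩
    exact ⟨(Subgroup.map (MulAut.conj g).toMonoidHom H,
            Subgroup.map (MulAut.conj g).toMonoidHom K),
      ⟨⟨hinv g H hH, h𝓚.2.2.1 g K hK⟩, Subgroup.map_mono hHK⟩, rfl⟩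
  have hX : X = 𝓗 := hmin X hXsub hXc hXne hXinv
  intro H hH
  rw [← hX] at hH
  obtain ⟨⟨H', K⟩, ⟨⟨-, hK⟩, hHK⟩, rfl⟩ := hH
  exact ⟨K, hK, hHK⟩

/-- In a closed set of subgroups, every chain has an upper bound inside the set: the
union (supremum) of the chain is a limit of the chain, hence belongs to the set. -/
lemma chain_bound {𝓗 : Set (Subgroup G)} (hcl : IsClosed 𝓗) {c : Set (Subgroup G)}
    (hsub : c ⊆ 𝓗) (hc : IsChain (· ≤ ·) c) {y : Subgroup G} (hy : y ∈ c) :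
    ∃ U ∈ 𝓗, ∀ z ∈ c, z ≤ U := by
  set U : Subgroup G := sSup c with hU
  have hmemU : ∀ g : G, g ∈ U ↔ ∃ H ∈ c, g ∈ H := fun g =>
    Subgroup.mem_sSup_of_directedOn ⟨y, hy⟩ hc.directedOn
  have hle : ∀ z ∈ c, z ≤ U := fun z hz => le_sSup hz
  refine ⟨U, ?_, hle⟩
  -- It suffices to show `U ∈ closure c ⊆ closure 𝓗 = 𝓗`.
  have hUcl : U ∈ closure c := by
    rw [mem_closure_iff_nhds]
    intro t ht
    rw [isInducing_chab.nhds_eq_comap, Filter.mem_comap] at ht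
    obtain ⟨V, hV, hVt⟩ := ht
    rw [nhds_pi, Filter.mem_pi] at hV
    obtain ⟨I, hIfin, t', ht', hIt'⟩ := hV
    -- find a member of the chain containing all elements of `I ∩ U`
    have key : ∃ H' ∈ c, ∀ g ∈ I, g ∈ U → g ∈ H' := by
      refine Set.Finite.induction_on (motive := fun I _ => ∃ H' ∈ c, ∀ g ∈ I, g ∈ U → g ∈ H') I hIfin ⟨y, hy, by simp⟩ ?_
      intro a s _ _ ih
      obtain ⟨H', hH'c, hH'⟩ := ih
      by_cases ha : a ∈ U
      · obtain ⟨Ha, hHac, haHa⟩ := (hmemU a).mp ha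
        rcases hc.total hH'c hHac with h1 | h1
        · exact ⟨Ha, hHac, fun g hg hgU => by
            rcases Set.mem_insert_iff.mp hg with rfl | hg
            · exact haHa
            · exact h1 (hH' g hg hgU)⟩
        · exact ⟨H', hH'c, fun g hg hgU => by
            rcases Set.mem_insert_iff.mp hg with rfl | hg
            · exact h1 haHa
            · exact hH' g hg hgU⟩
      · exact ⟨H', hH'c, fun g hg hgU => by
          rcases Set.mem_insert_iff.mp hg with rfl | hg
          · exact absurd hgU ha
          · exact hH' g hg hgU⟩
    obtain ⟨H', hH'c, hH'⟩ := key
    have hagree : ∀ g ∈ I, chab H' g = chab U g := by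
      intro g hg
      have hiff : (g ∈ H') ↔ (g ∈ U) := by
        constructor
        · exact fun h => hle H' hH'c h
        · exact fun h => hH' g hg h
      show (@decide (g ∈ H') (Classical.propDecidable _)) =
        (@decide (g ∈ U) (Classical.propDecidable _))
      exact decide_eq_decide.mpr hiff
    refine ⟨H', hVt ?_, hH'c⟩
    show chab H' ∈ V
    apply hIt'
    intro g hg
    rw [hagree g hg]
    exact mem_of_mem_nhds (ht' g)
  have : closure c ⊆ 𝓗 := by
    rw [← hcl.closure_eq]
    exact closure_mono hsub
  exact this hUcl

/-- Every URS contains a maximal element (Zorn's lemma). -/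
lemma exists_maximal {𝓗 : Set (Subgroup G)} (h : IsURS 𝓗) :
    ∃ H ∈ 𝓗, ∀ H' ∈ 𝓗, H ≤ H' → H' = H := by
  obtain ⟨x, hx⟩ := h.2.1
  obtain ⟨m, -, hm⟩ := zorn_le_nonempty₀ 𝓗
    (fun c hcsub hchain y hy => chain_bound h.1 hcsub hchain hy) x hx
  exact ⟨m, hm.1, fun H' h1 h2 => le_antisymm (hm.2 h1 h2) h2⟩

end URSProofAux

open URSProofAux in
/-- The relation `≼` is a partial order on the set of uniformly recurrent subgroups:
reflexive, transitive and antisymmetric. -/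
theorem ursPrec_partialOrder {G : Type*} [Group G] [Countable G] :
    (∀ 𝓗 : Set (Subgroup G), IsURS 𝓗 → URSPrec 𝓗 𝓗) ∧
    (∀ 𝓗 𝓚 𝓛 : Set (Subgroup G), IsURS 𝓗 → IsURS 𝓚 → IsURS 𝓛 →
      URSPrec 𝓗 𝓚 → URSPrec 𝓚 𝓛 → URSPrec 𝓗 𝓛) ∧
    (∀ 𝓗 𝓚 : Set (Subgroup G), IsURS 𝓗 → IsURS 𝓚 →
      URSPrec 𝓗 𝓚 → URSPrec 𝓚 𝓗 → 𝓗 = 𝓚) := by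
  refine ⟨?_, ?_, ?_⟩
  · intro 𝓗 h
    obtain ⟨H, hH⟩ := h.2.1
    exact ⟨H, hH, H, hH, le_rfl⟩
  · rintro 𝓗 𝓚 𝓛 h𝓗 h𝓚 h𝓛 ⟨H, hH, K, hK, hHK⟩ h2
    obtain ⟨L, hL, hKL⟩ := urs_up h𝓚 h𝓛 h2 K hK
    exact ⟨H, hH, L, hL, hHK.trans hKL⟩
  · intro 𝓗 𝓚 h𝓗 h𝓚 h1 h2
    obtain ⟨H₀, hH₀, hmax⟩ := exists_maximal h𝓗
    obtain ⟨K, hK, hH₀K⟩ := urs_up h𝓗 h𝓚 h1 H₀ hH₀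
    obtain ⟨H₁, hH₁, hKH₁⟩ := urs_up h𝓚 h𝓗 h2 K hK
    have e1 : H₁ = H₀ := hmax H₁ hH₁ (hH₀K.trans hKH₁)
    have hK0 : K = H₀ := le_antisymm (e1 ▸ hKH₁) hH₀K
    have hmem : H₀ ∈ 𝓗 ∩ 𝓚 := ⟨hH₀, hK0 ▸ hK⟩
    have hicl : IsClosed (𝓗 ∩ 𝓚) := h𝓗.1.inter h𝓚.1
    have hinv : ∀ (g : G), ∀ H ∈ 𝓗 ∩ 𝓚,
        Subgroup.map (MulAut.conj g).toMonoidHom H ∈ 𝓗 ∩ 𝓚 :=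
      fun g H hH => ⟨h𝓗.2.2.1 g H hH.1, h𝓚.2.2.1 g H hH.2⟩
    have e𝓗 := h𝓗.2.2.2 (𝓗 ∩ 𝓚) Set.inter_subset_left hicl ⟨H₀, hmem⟩ hinv
    have e𝓚 := h𝓚.2.2.2 (𝓗 ∩ 𝓚) Set.inter_subset_right hicl ⟨H₀, hmem⟩ hinv
    exact e𝓗.symm.trans e𝓚
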